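/- Let Γ and Γ' be connected bicolored graphs with countable valence, and suppose Γ weakly covers Γ'. Then the bicolored trees T(Γ) and T(Γ') obtained by duplicating every edge countably infinitely many times and taking the universal cover (equivalently, by the inductive tree construction with countably infinite multiplicity) are isomorphic as bicolored trees. -/

import Mathlib

/-- A bicolored graph: a multigraph (edges have unordered pairs of endpoints)
with vertices colored by a two-element set, encoded as `Bool`
(`false` = black, `true` = white). -/
structure BiGraph where
  V : Type
  E : Type
  ends : E → Sym2 V
  color : V → Bool

namespace BiGraph

/-- Adjacency: some edge has endpoints `{u, v}`. -/
def Adj (G : BiGraph) (u v : G.V) : Prop := ∃ e : G.E, G.ends e = s(u, v)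

/-- Connectivity: any two vertices are joined by an edge path. -/
def Connected (G : BiGraph) : Prop := ∀ u v : G.V, Relation.ReflTransGen G.Adj u v

/-- A color-preserving graph homomorphism. -/
def IsHom (G G' : BiGraph) (fV : G.V → G'.V) (fE : G.E → G'.E) : Prop :=
  (∀ e : G.E, G'.ends (fE e) = (G.ends e).map fV) ∧ ∀ v : G.V, G'.color (fV v) = G.color v

/-- A weak covering: a color-preserving homomorphism such that every edge at
`fV v` lifts to an edge at `v`. -/
def IsWeakCovering (G G' : BiGraph) (fV : G.V → G'.V) (fE : G.E → G'.E) : Prop :=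
  IsHom G G' fV fE ∧
    ∀ (v : G.V) (e' : G'.E), fV v ∈ G'.ends e' → ∃ e : G.E, v ∈ G.ends e ∧ fE e = e'

/-- `G` weakly covers `G'`. -/
def Covers (G G' : BiGraph) : Prop := ∃ fV fE, IsWeakCovering G G' fV fE

/-- Bisimilarity: the two graphs weakly cover a common graph. -/
def Bisimilar (G₁ G₂ : BiGraph) : Prop := ∃ G' : BiGraph, Covers G₁ G' ∧ Covers G₂ G'

/-- An isomorphism of bicolored graphs: a bijective color-preserving homomorphism. -/
def IsIso (G G' : BiGraph) (fV : G.V → G'.V) (fE : G.E → G'.E) : Prop :=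
  IsHom G G' fV fE ∧ Function.Bijective fV ∧ Function.Bijective fE

def Isomorphic (G G' : BiGraph) : Prop := ∃ fV fE, IsIso G G' fV fE

/-- Every vertex has countable valence. -/
def CountableValence (G : BiGraph) : Prop := ∀ v : G.V, Countable {e : G.E // v ∈ G.ends e}

/-- A tree: connected, and no edge's endpoints can be joined avoiding that edge
(equivalently: no loops, no multiple edges, no cycles). -/
def IsTree (G : BiGraph) : Prop :=
  G.Connected ∧ ∀ (e₀ : G.E) (u w : G.V), G.ends e₀ = s(u, w) →
    ¬ Relation.ReflTransGen (fun a b => ∃ e : G.E, e ≠ e₀ ∧ G.ends e = s(a, b)) u w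

end BiGraph

namespace BiGraph

variable (G : BiGraph) (v₀ : G.V)

/-- The label (in `G`) of a vertex of the canonical tree, encoded as the
reversed list of steps of a walk starting at the root `v₀`: the label is the
endpoint of the walk. Each step records a copy index in `ℕ` (edges are
duplicated countably often) and the next vertex of `G`. -/
def lab : List (ℕ × G.V) → G.V
  | [] => v₀
  | p :: _ => p.2

/-- Validity of a (reversed) walk: each step moves to a vertex adjacent to the
current endpoint. -/
def ValidW : List (ℕ × G.V) → Prop
  | [] => True
  | p :: t => ValidW t ∧ G.Adj (G.lab v₀ t) p.2

theorem validW_tail (l : List (ℕ × G.V)) (h : G.ValidW v₀ l) : G.ValidW v₀ l.tail := by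
  cases l with
  | nil => exact h
  | cons p t => exact h.1

/-- The canonical bicolored tree of `(G, v₀)`: the universal cover of the graph
obtained from `G` by duplicating each edge countably infinitely often.
Vertices are valid rooted walks; each nonempty walk determines the edge to its
parent (its tail). Colors are inherited from labels. -/
def TreeOf : BiGraph where
  V := {l : List (ℕ × G.V) // G.ValidW v₀ l}
  E := {l : List (ℕ × G.V) // G.ValidW v₀ l ∧ l ≠ []}
  ends := fun e => s(⟨e.val.tail, G.validW_tail v₀ e.val e.2.1⟩, ⟨e.val, e.2.1⟩)
  color := fun x => G.color (G.lab v₀ x.val)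

end BiGraph

namespace BiGraph

theorem adj_symm (G : BiGraph) {u v : G.V} (h : G.Adj u v) : G.Adj v u := by
  obtain ⟨e, he⟩ := h; exact ⟨e, he.trans Sym2.eq_swap⟩

/-- endpoint of a forward walk -/
def labF (G : BiGraph) : G.V → List (ℕ × G.V) → G.V
  | v, [] => v
  | _, p :: t => labF G p.2 t

def ValidF (G : BiGraph) : G.V → List (ℕ × G.V) → Prop
  | _, [] => True
  | v, p :: t => G.Adj v p.2 ∧ ValidF G p.2 t

theorem labF_append (G : BiGraph) (p : ℕ × G.V) :
    ∀ (w : List (ℕ × G.V)) (v : G.V), G.labF v (w ++ [p]) = p.2 := by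
  intro w
  induction w with
  | nil => intro v; rfl
  | cons q t ih => intro v; exact ih q.2

theorem validF_append (G : BiGraph) (p : ℕ × G.V) :
    ∀ (w : List (ℕ × G.V)) (v : G.V),
      G.ValidF v (w ++ [p]) ↔ G.ValidF v w ∧ G.Adj (G.labF v w) p.2 := by
  intro w
  induction w with
  | nil => intro v; simp [ValidF, labF]
  | cons q t ih =>
      intro v
      rw [List.cons_append]
      show (G.Adj v q.2 ∧ G.ValidF q.2 (t ++ [p])) ↔
        (G.Adj v q.2 ∧ G.ValidF q.2 t) ∧ G.Adj (G.labF q.2 t) p.2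
      rw [ih q.2]
      tauto

theorem lab_eq_labF (G : BiGraph) :
    ∀ (l : List (ℕ × G.V)) (v₀ : G.V), G.lab v₀ l = G.labF v₀ l.reverse := by
  intro l v₀
  cases l with
  | nil => rfl
  | cons p t => simp [lab, List.reverse_cons, labF_append]

theorem validW_iff_validF (G : BiGraph) :
    ∀ (l : List (ℕ × G.V)) (v₀ : G.V), G.ValidW v₀ l ↔ G.ValidF v₀ l.reverse := by
  intro l
  induction l with
  | nil => intro v₀; simp [ValidW, ValidF]
  | cons p t ih =>
      intro v₀
      simp only [ValidW, List.reverse_cons, validF_append, ← ih, ← lab_eq_labF]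

open Classical in
/-- bump the copy index of a first step towards `a` -/
noncomputable def rho (G : BiGraph) (a : G.V) : List (ℕ × G.V) → List (ℕ × G.V)
  | [] => []
  | (m, w) :: r => if w = a then (m + 1, w) :: r else (m, w) :: r

open Classical in
/-- the re-rooting bijection on forward walks: walks from `a` to walks from `b` -/
noncomputable def phi (G : BiGraph) (a b : G.V) : List (ℕ × G.V) → List (ℕ × G.V)
  | [] => [(0, a)]
  | (n, x) :: r =>
    if x = b then (if n = 0 then G.rho a r else (0, a) :: (n - 1, x) :: r)
    else (0, a) :: (n, x) :: r

theorem phi_phi (G : BiGraph) (a b : G.V) : ∀ w, G.phi b a (G.phi a b w) = w := by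
  intro w
  match w with
  | [] => simp [phi, rho]
  | (n, x) :: r =>
    by_cases hx : x = b
    · subst hx
      by_cases hn : n = 0
      · subst hn
        match r with
        | [] => simp [phi, rho]
        | (m, w) :: r' =>
          by_cases hw : w = a
          · subst hw; simp [phi, rho]
          · simp [phi, rho, hw]
      · have : n - 1 + 1 = n := by omega
        simp [phi, rho, hn, this]
    · simp [phi, rho, hx]

theorem rho_labF (G : BiGraph) (a v : G.V) : ∀ r, G.labF v (G.rho a r) = G.labF v r := by
  intro r
  match r with
  | [] => rfl
  | (m, w) :: r' => by_cases hw : w = a <;> simp [rho, hw, labF]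

theorem rho_validF (G : BiGraph) (a v : G.V) : ∀ r, G.ValidF v r → G.ValidF v (G.rho a r) := by
  intro r h
  match r with
  | [] => exact h
  | (m, w) :: r' => by_cases hw : w = a <;> simp_all [rho, hw, ValidF]

theorem phi_labF (G : BiGraph) (a b : G.V) :
    ∀ w, G.labF b (G.phi a b w) = G.labF a w := by
  intro w
  match w with
  | [] => rfl
  | (n, x) :: r =>
    by_cases hx : x = b
    · subst hx
      by_cases hn : n = 0
      · subst hn
        simp only [phi, if_pos rfl, if_pos rfl]
        show G.labF x (G.rho a r) = G.labF x r
        exact G.rho_labF a x r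
      · simp [phi, hn, labF]
    · simp [phi, hx, labF]

theorem phi_validF (G : BiGraph) {a b : G.V} (hab : G.Adj a b) :
    ∀ w, G.ValidF a w → G.ValidF b (G.phi a b w) := by
  intro w hw
  have hba : G.Adj b a := G.adj_symm hab
  match w with
  | [] => exact ⟨hba, trivial⟩
  | (n, x) :: r =>
    obtain ⟨h1, h2⟩ := hw
    by_cases hx : x = b
    · subst hx
      by_cases hn : n = 0
      · subst hn
        simp only [phi, if_pos rfl]
        exact G.rho_validF a x r h2
      · simp only [phi, if_pos rfl, if_neg hn]
        exact ⟨hba, h1, h2⟩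
    · simp only [phi, if_neg hx]
      exact ⟨hba, h1, h2⟩

theorem phi_append (G : BiGraph) (a b : G.V) :
    ∀ (w : List (ℕ × G.V)) (s : ℕ × G.V), ¬(w = [] ∧ s = (0, b)) →
      ∃ s', G.phi a b (w ++ [s]) = G.phi a b w ++ [s'] := by
  intro w s hne
  match w with
  | [] =>
    obtain ⟨n, x⟩ := s
    by_cases hx : x = b
    · subst hx
      have hn : n ≠ 0 := fun h => hne ⟨rfl, by rw [h]⟩
      exact ⟨(n - 1, x), by simp [phi, hn]⟩
    · exact ⟨(n, x), by simp [phi, hx]⟩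
  | (n, x) :: r =>
    by_cases hx : x = b
    · subst hx
      by_cases hn : n = 0
      · subst hn
        match r with
        | [] =>
          obtain ⟨m, w'⟩ := s
          by_cases hw : w' = a
          · subst hw; exact ⟨(m + 1, w'), by simp [phi, rho]⟩
          · exact ⟨(m, w'), by simp [phi, rho, hw]⟩
        | (m, w') :: r' =>
          refine ⟨s, ?_⟩
          by_cases hw : w' = a <;> simp [phi, rho, hw]
      · refine ⟨s, ?_⟩; simp [phi, hn]
    · refine ⟨s, ?_⟩; simp [phi, hx]

theorem phi_eq_nil (G : BiGraph) (a b : G.V) {w : List (ℕ × G.V)}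
    (h : G.phi a b w = []) : w = [(0, b)] := by
  have := G.phi_phi a b w
  rw [h] at this
  rw [← this]; rfl

theorem phi_eq_single (G : BiGraph) (a b : G.V) {w : List (ℕ × G.V)}
    (h : G.phi a b w = [(0, a)]) : w = [] := by
  have := G.phi_phi a b w
  rw [h] at this
  rw [← this]
  simp [phi, rho]

open Classical in
noncomputable def rerootV (G : BiGraph) {a b : G.V} (hab : G.Adj a b) :
    (G.TreeOf a).V → (G.TreeOf b).V := fun x =>
  ⟨(G.phi a b x.1.reverse).reverse, by
    rw [validW_iff_validF, List.reverse_reverse]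
    exact G.phi_validF hab _ ((G.validW_iff_validF x.1 a).mp x.2)⟩

open Classical in
noncomputable def rerootE (G : BiGraph) {a b : G.V} (hab : G.Adj a b) :
    (G.TreeOf a).E → (G.TreeOf b).E := fun e =>
  if h : e.1 = [(0, b)] then
    ⟨[(0, a)], ⟨trivial, G.adj_symm hab⟩, by simp⟩
  else
    ⟨(G.phi a b e.1.reverse).reverse, by
      refine ⟨?_, ?_⟩
      · rw [validW_iff_validF, List.reverse_reverse]
        exact G.phi_validF hab _ ((G.validW_iff_validF e.1 a).mp e.2.1)
      · intro hnil
        rw [List.reverse_eq_nil_iff] at hnil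
        have := G.phi_eq_nil a b hnil
        rw [List.reverse_eq_iff] at this
        exact h (by simpa using this)⟩

theorem rerootV_comp (G : BiGraph) {a b : G.V} (hab : G.Adj a b)
    (x : (G.TreeOf a).V) : G.rerootV (G.adj_symm hab) (G.rerootV hab x) = x := by
  apply Subtype.ext
  simp [rerootV, G.phi_phi a b]

theorem sym2_subtype_ext {α : Type} {P : α → Prop} {x y x' y' : Subtype P}
    (hx : x.1 = x'.1) (hy : y.1 = y'.1) : s(x, y) = s(x', y') := by
  rw [Subtype.ext hx, Subtype.ext hy]

theorem rerootE_val_pos (G : BiGraph) {a b : G.V} (hab : G.Adj a b)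
    (e : (G.TreeOf a).E) (h : e.1 = [(0, b)]) : (G.rerootE hab e).1 = [(0, a)] := by
  simp [rerootE, h]

theorem rerootE_val_neg (G : BiGraph) {a b : G.V} (hab : G.Adj a b)
    (e : (G.TreeOf a).E) (h : ¬ e.1 = [(0, b)]) :
    (G.rerootE hab e).1 = (G.phi a b e.1.reverse).reverse := by
  simp [rerootE, h]

theorem rerootV_val (G : BiGraph) {a b : G.V} (hab : G.Adj a b)
    (x : (G.TreeOf a).V) : (G.rerootV hab x).1 = (G.phi a b x.1.reverse).reverse := rfl

theorem rerootE_comp (G : BiGraph) {a b : G.V} (hab : G.Adj a b)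
    (e : (G.TreeOf a).E) : G.rerootE (G.adj_symm hab) (G.rerootE hab e) = e := by
  apply Subtype.ext
  by_cases h : e.1 = [(0, b)]
  · have h1 := G.rerootE_val_pos hab e h
    rw [G.rerootE_val_pos (G.adj_symm hab) _ h1, h]
  · have h1 := G.rerootE_val_neg hab e h
    have h2 : ¬ (G.rerootE hab e).1 = [(0, a)] := by
      rw [h1]
      intro hc
      rw [List.reverse_eq_iff] at hc
      have := G.phi_eq_single a b (by simpa using hc)
      rw [List.reverse_eq_nil_iff] at this
      exact e.2.2 this
    rw [G.rerootE_val_neg (G.adj_symm hab) _ h2, h1]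
    simp [G.phi_phi a b]

theorem isomorphic_treeOf_adj (G : BiGraph) {a b : G.V} (hab : G.Adj a b) :
    Isomorphic (G.TreeOf a) (G.TreeOf b) := by
  refine ⟨G.rerootV hab, G.rerootE hab, ⟨?_, ?_⟩, ?_, ?_⟩
  · -- ends
    intro e
    show s(⟨(G.rerootE hab e).1.tail, _⟩, ⟨(G.rerootE hab e).1, _⟩)
      = Sym2.map (G.rerootV hab) s(⟨e.1.tail, G.validW_tail a e.1 e.2.1⟩, ⟨e.1, e.2.1⟩)
    refine Eq.trans ?_ (Sym2.map_pair_eq _ _ _).symm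
    by_cases h : e.1 = [(0, b)]
    · refine Sym2.eq_swap.trans ?_
      apply sym2_subtype_ext
      · show ((G.rerootE hab e).1) = (G.rerootV hab ⟨e.1.tail, G.validW_tail a e.1 e.2.1⟩).1
        rw [G.rerootE_val_pos hab e h]
        show _ = (G.phi a b ((e.1).tail.reverse)).reverse
        rw [h]
        simp [phi]
      · show ((G.rerootE hab e).1).tail = (G.rerootV hab ⟨e.1, e.2.1⟩).1
        rw [G.rerootE_val_pos hab e h]
        show _ = (G.phi a b (e.1.reverse)).reverse
        rw [h]
        simp [phi, rho]
    · obtain ⟨l, hv, hne⟩ := e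
      match l, hne, hv, h with
      | p :: t, hne, hv, h =>
        have hcond : ¬(t.reverse = [] ∧ p = (0, b)) := by
          rintro ⟨h1, h2⟩
          rw [List.reverse_eq_nil_iff] at h1
          exact h (by show p :: t = [(0, b)]; rw [h1, h2])
        obtain ⟨s', hs'⟩ := G.phi_append a b t.reverse p hcond
        have hval : (G.phi a b (p :: t).reverse).reverse
            = s' :: (G.phi a b t.reverse).reverse := by
          rw [List.reverse_cons, hs', List.reverse_append]; rfl
        have hE := G.rerootE_val_neg hab ⟨p :: t, hv, hne⟩ h
        apply sym2_subtype_ext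
        · show ((G.rerootE hab ⟨p :: t, hv, hne⟩).1).tail = _
          rw [hE]
          show ((G.phi a b (p :: t).reverse).reverse).tail = _
          rw [hval]
          rfl
        · rw [hE]
          rfl
  · -- colors
    intro x
    show G.color (G.lab b (G.rerootV hab x).1) = G.color (G.lab a x.1)
    rw [G.rerootV_val hab x]
    rw [lab_eq_labF, List.reverse_reverse, phi_labF, ← lab_eq_labF]
  · -- bij V
    exact Function.bijective_iff_has_inverse.mpr
      ⟨G.rerootV (G.adj_symm hab), G.rerootV_comp hab,
        fun x => G.rerootV_comp (G.adj_symm hab) x⟩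
  · -- bij E
    exact Function.bijective_iff_has_inverse.mpr
      ⟨G.rerootE (G.adj_symm hab), G.rerootE_comp hab,
        fun e => G.rerootE_comp (G.adj_symm hab) e⟩

section Cover

variable {G G' : BiGraph} {fV : G.V → G'.V} {fE : G.E → G'.E}

theorem adj_map (hwc : IsWeakCovering G G' fV fE) {x w : G.V} (h : G.Adj x w) :
    G'.Adj (fV x) (fV w) := by
  obtain ⟨e, he⟩ := h
  exact ⟨fE e, by rw [hwc.1.1 e, he, Sym2.map_pair_eq]⟩

theorem adj_lift (hwc : IsWeakCovering G G' fV fE) {x : G.V} {w' : G'.V}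
    (h : G'.Adj (fV x) w') : ∃ w : G.V, G.Adj x w ∧ fV w = w' := by
  obtain ⟨e', he'⟩ := h
  obtain ⟨e, hx, hfe⟩ := hwc.2 x e' (by rw [he']; exact Sym2.mem_mk_left _ _)
  obtain ⟨w, hw⟩ := Sym2.mem_iff_exists.mp hx
  refine ⟨w, ⟨e, hw⟩, ?_⟩
  have heq : s(fV x, w') = s(fV x, fV w) := by
    rw [← he', ← hfe, hwc.1.1 e, hw, Sym2.map_pair_eq]
  rcases Sym2.eq_iff.mp heq with ⟨_, h2⟩ | ⟨h1, h2⟩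
  · exact h2.symm
  · rw [← h1, h2]

theorem countable_adj (hcv : G.CountableValence) (x : G.V) :
    Countable {w : G.V // G.Adj x w} := by
  haveI := hcv x
  have hf : Function.Injective (fun w : {w : G.V // G.Adj x w} =>
      (⟨w.2.choose, by rw [w.2.choose_spec]; exact Sym2.mem_mk_left _ _⟩ :
        {e : G.E // x ∈ G.ends e})) := by
    intro w1 w2 h12
    have h1 := w1.2.choose_spec
    have h2 := w2.2.choose_spec
    have h3 : w1.2.choose = w2.2.choose := congrArg Subtype.val h12
    rw [h3, h2] at h1
    exact Subtype.ext (Sym2.congr_right.mp h1.symm)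
  exact hf.countable

open Classical in
noncomputable def childEquiv (hwc : IsWeakCovering G G' fV fE)
    (hcv : G.CountableValence) (x : G.V) :
    (ℕ × {w : G.V // G.Adj x w}) ≃ (ℕ × {w' : G'.V // G'.Adj (fV x) w'}) :=
  haveI : Countable {w : G.V // G.Adj x w} := countable_adj hcv x
  let g : {w : G.V // G.Adj x w} → {w' : G'.V // G'.Adj (fV x) w'} :=
    fun w => ⟨fV w.1, adj_map hwc w.2⟩
  haveI hne : ∀ b, Nonempty {a // g a = b} := fun b => by
    obtain ⟨w, hadj, hfw⟩ := adj_lift hwc b.2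
    exact ⟨⟨⟨w, hadj⟩, Subtype.ext hfw⟩⟩
  (Equiv.prodComm _ _).trans
    ((((Equiv.sigmaFiberEquiv g).symm.prodCongr (Equiv.refl ℕ)).trans
      ((Equiv.sigmaProdDistrib _ _).trans
        ((Equiv.sigmaCongrRight (fun b =>
            Classical.choice (nonempty_equiv_of_countable :
              Nonempty ({a // g a = b} × ℕ ≃ ℕ)))).trans
          (Equiv.sigmaEquivProd _ ℕ)))).trans
      (Equiv.prodComm _ _))

theorem childEquiv_snd (hwc : IsWeakCovering G G' fV fE)
    (hcv : G.CountableValence) (x : G.V) (p : ℕ × {w : G.V // G.Adj x w}) :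
    ((childEquiv hwc hcv x p).2 : G'.V) = fV p.2.1 := by
  rcases p with ⟨n, a⟩; rfl

open Classical in
noncomputable def coverW (hwc : IsWeakCovering G G' fV fE)
    (hcv : G.CountableValence) (u : G.V) : List (ℕ × G.V) → List (ℕ × G'.V)
  | [] => []
  | (n, w) :: t =>
    (if h : G.Adj (G.lab u t) w then
       ((childEquiv hwc hcv (G.lab u t) (n, ⟨w, h⟩)).1,
        (childEquiv hwc hcv (G.lab u t) (n, ⟨w, h⟩)).2.1)
     else (n, fV w)) :: coverW hwc hcv u t

open Classical in
noncomputable def coverB (hwc : IsWeakCovering G G' fV fE)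
    (hcv : G.CountableValence) (u : G.V) : List (ℕ × G'.V) → List (ℕ × G.V)
  | [] => []
  | (n, w') :: t =>
    (if h : G'.Adj (fV (G.lab u (coverB hwc hcv u t))) w' then
       (((childEquiv hwc hcv (G.lab u (coverB hwc hcv u t))).symm (n, ⟨w', h⟩)).1,
        ((childEquiv hwc hcv (G.lab u (coverB hwc hcv u t))).symm (n, ⟨w', h⟩)).2.1)
     else (n, u)) :: coverB hwc hcv u t

theorem coverW_spec (hwc : IsWeakCovering G G' fV fE)
    (hcv : G.CountableValence) (u : G.V) :
    ∀ l, G.ValidW u l →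
      G'.ValidW (fV u) (coverW hwc hcv u l) ∧
        G'.lab (fV u) (coverW hwc hcv u l) = fV (G.lab u l) := by
  intro l
  induction l with
  | nil => exact fun _ => ⟨trivial, rfl⟩
  | cons p t ih =>
      obtain ⟨n, w⟩ := p
      rintro ⟨hv, hadj⟩
      obtain ⟨ih1, ih2⟩ := ih hv
      simp only [coverW, dif_pos hadj]
      refine ⟨⟨ih1, ?_⟩, ?_⟩
      · rw [show G'.lab (fV u) (coverW hwc hcv u t) = fV (G.lab u t) from ih2]
        exact (childEquiv hwc hcv (G.lab u t) (n, ⟨w, hadj⟩)).2.2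
      · exact childEquiv_snd hwc hcv (G.lab u t) (n, ⟨w, hadj⟩)

theorem coverB_coverW (hwc : IsWeakCovering G G' fV fE)
    (hcv : G.CountableValence) (u : G.V) :
    ∀ l, G.ValidW u l → coverB hwc hcv u (coverW hwc hcv u l) = l := by
  intro l
  induction l with
  | nil => exact fun _ => rfl
  | cons p t ih =>
      obtain ⟨n, w⟩ := p
      rintro ⟨hv, hadj⟩
      have ih' := ih hv
      have hadj' : G'.Adj (fV (G.lab u t))
          ((childEquiv hwc hcv (G.lab u t) (n, ⟨w, hadj⟩)).2.1) :=
        (childEquiv hwc hcv (G.lab u t) (n, ⟨w, hadj⟩)).2.2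
      simp only [coverW]
      rw [dif_pos hadj]
      simp only [coverB]
      rw [ih']
      rw [dif_pos hadj']
      have hq : (((childEquiv hwc hcv (G.lab u t) (n, ⟨w, hadj⟩)).1,
          ⟨(childEquiv hwc hcv (G.lab u t) (n, ⟨w, hadj⟩)).2.1, hadj'⟩) :
            ℕ × {w' : G'.V // G'.Adj (fV (G.lab u t)) w'})
          = childEquiv hwc hcv (G.lab u t) (n, ⟨w, hadj⟩) := by
        exact Prod.ext rfl (Subtype.ext rfl)
      rw [hq, Equiv.symm_apply_apply]

theorem coverB_spec (hwc : IsWeakCovering G G' fV fE)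
    (hcv : G.CountableValence) (u : G.V) :
    ∀ m, G'.ValidW (fV u) m →
      G.ValidW u (coverB hwc hcv u m) ∧
        fV (G.lab u (coverB hwc hcv u m)) = G'.lab (fV u) m := by
  intro m
  induction m with
  | nil => exact fun _ => ⟨trivial, rfl⟩
  | cons p t ih =>
      obtain ⟨n, w'⟩ := p
      rintro ⟨hv', hadj'⟩
      obtain ⟨ih1, ih2⟩ := ih hv'
      have hc : G'.Adj (fV (G.lab u (coverB hwc hcv u t))) w' := by
        rw [ih2]; exact hadj'
      simp only [coverB, dif_pos hc]
      refine ⟨⟨ih1, ?_⟩, ?_⟩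
      · exact ((childEquiv hwc hcv (G.lab u (coverB hwc hcv u t))).symm (n, ⟨w', hc⟩)).2.2
      · show fV (((childEquiv hwc hcv (G.lab u (coverB hwc hcv u t))).symm
            (n, ⟨w', hc⟩)).2.1) = w'
        rw [← childEquiv_snd hwc hcv (G.lab u (coverB hwc hcv u t))
          ((childEquiv hwc hcv (G.lab u (coverB hwc hcv u t))).symm (n, ⟨w', hc⟩))]
        rw [Equiv.apply_symm_apply]

theorem coverW_coverB (hwc : IsWeakCovering G G' fV fE)
    (hcv : G.CountableValence) (u : G.V) :
    ∀ m, G'.ValidW (fV u) m → coverW hwc hcv u (coverB hwc hcv u m) = m := by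
  intro m
  induction m with
  | nil => exact fun _ => rfl
  | cons p t ih =>
      obtain ⟨n, w'⟩ := p
      rintro ⟨hv', hadj'⟩
      have ih' := ih hv'
      obtain ⟨ih1, ih2⟩ := coverB_spec hwc hcv u t hv'
      have hc : G'.Adj (fV (G.lab u (coverB hwc hcv u t))) w' := by
        rw [ih2]; exact hadj'
      simp only [coverB, dif_pos hc]
      have hadj2 : G.Adj (G.lab u (coverB hwc hcv u t))
          (((childEquiv hwc hcv (G.lab u (coverB hwc hcv u t))).symm (n, ⟨w', hc⟩)).2.1) :=
        ((childEquiv hwc hcv (G.lab u (coverB hwc hcv u t))).symm (n, ⟨w', hc⟩)).2.2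
      simp only [coverW, dif_pos hadj2, ih']
      have hq : ((((childEquiv hwc hcv (G.lab u (coverB hwc hcv u t))).symm (n, ⟨w', hc⟩)).1,
          ⟨(((childEquiv hwc hcv (G.lab u (coverB hwc hcv u t))).symm (n, ⟨w', hc⟩)).2.1),
            hadj2⟩) : ℕ × {w : G.V // G.Adj (G.lab u (coverB hwc hcv u t)) w})
          = (childEquiv hwc hcv (G.lab u (coverB hwc hcv u t))).symm (n, ⟨w', hc⟩) :=
        Prod.ext rfl (Subtype.ext rfl)
      rw [hq, Equiv.apply_symm_apply]

theorem coverW_ne_nil (hwc : IsWeakCovering G G' fV fE)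
    (hcv : G.CountableValence) (u : G.V) {l : List (ℕ × G.V)} (h : l ≠ []) :
    coverW hwc hcv u l ≠ [] := by
  match l, h with
  | (n, w) :: t, _ => simp [coverW]

theorem coverB_ne_nil (hwc : IsWeakCovering G G' fV fE)
    (hcv : G.CountableValence) (u : G.V) {m : List (ℕ × G'.V)} (h : m ≠ []) :
    coverB hwc hcv u m ≠ [] := by
  match m, h with
  | (n, w') :: t, _ => simp [coverB]

theorem isomorphic_treeOf_cover (hwc : IsWeakCovering G G' fV fE)
    (hcv : G.CountableValence) (u : G.V) :
    Isomorphic (G.TreeOf u) (G'.TreeOf (fV u)) := by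
  let FV : (G.TreeOf u).V → (G'.TreeOf (fV u)).V :=
    fun x => ⟨coverW hwc hcv u x.1, (coverW_spec hwc hcv u x.1 x.2).1⟩
  let FE : (G.TreeOf u).E → (G'.TreeOf (fV u)).E :=
    fun e => ⟨coverW hwc hcv u e.1, (coverW_spec hwc hcv u e.1 e.2.1).1,
      coverW_ne_nil hwc hcv u e.2.2⟩
  refine ⟨FV, FE, ⟨?_, ?_⟩, ?_, ?_⟩
  · rintro ⟨l, hv, hne⟩
    show s(⟨(coverW hwc hcv u l).tail, _⟩, ⟨coverW hwc hcv u l, _⟩)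
      = Sym2.map FV s(⟨l.tail, G.validW_tail u l hv⟩, ⟨l, hv⟩)
    refine Eq.trans ?_ (Sym2.map_pair_eq _ _ _).symm
    apply sym2_subtype_ext
    · show (coverW hwc hcv u l).tail = coverW hwc hcv u l.tail
      match l, hne with
      | p :: t, _ =>
        obtain ⟨n, w⟩ := p
        simp only [coverW, List.tail_cons]
    · rfl
  · intro x
    show G'.color (G'.lab (fV u) (coverW hwc hcv u x.1)) = G.color (G.lab u x.1)
    rw [(coverW_spec hwc hcv u x.1 x.2).2, hwc.1.2]
  · exact Function.bijective_iff_has_inverse.mpr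
      ⟨fun y => ⟨coverB hwc hcv u y.1, (coverB_spec hwc hcv u y.1 y.2).1⟩,
        fun x => Subtype.ext (coverB_coverW hwc hcv u x.1 x.2),
        fun y => Subtype.ext (coverW_coverB hwc hcv u y.1 y.2)⟩
  · exact Function.bijective_iff_has_inverse.mpr
      ⟨fun e' => ⟨coverB hwc hcv u e'.1, (coverB_spec hwc hcv u e'.1 e'.2.1).1,
          coverB_ne_nil hwc hcv u e'.2.2⟩,
        fun e => Subtype.ext (coverB_coverW hwc hcv u e.1 e.2.1),
        fun e' => Subtype.ext (coverW_coverB hwc hcv u e'.1 e'.2.1)⟩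

theorem cover_surj (hwc : IsWeakCovering G G' fV fE) (v₀ : G.V) {v' : G'.V}
    (h : Relation.ReflTransGen G'.Adj (fV v₀) v') : ∃ u : G.V, fV u = v' := by
  induction h with
  | refl => exact ⟨v₀, rfl⟩
  | tail _ hadj ih =>
      obtain ⟨u, hu⟩ := ih
      rw [← hu] at hadj
      obtain ⟨w, _, hw⟩ := adj_lift hwc hadj
      exact ⟨w, hw⟩

end Cover

theorem isomorphic_refl (G : BiGraph) : Isomorphic G G := by
  refine ⟨id, id, ⟨fun e => ?_, fun v => rfl⟩, Function.bijective_id, Function.bijective_id⟩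
  simp

theorem isomorphic_trans {G₁ G₂ G₃ : BiGraph} (h₁ : Isomorphic G₁ G₂)
    (h₂ : Isomorphic G₂ G₃) : Isomorphic G₁ G₃ := by
  obtain ⟨fV, fE, ⟨hend, hcol⟩, hbV, hbE⟩ := h₁
  obtain ⟨gV, gE, ⟨gend, gcol⟩, gbV, gbE⟩ := h₂
  refine ⟨gV ∘ fV, gE ∘ fE, ⟨fun e => ?_, fun v => ?_⟩, gbV.comp hbV, gbE.comp hbE⟩
  · show G₃.ends (gE (fE e)) = _
    rw [gend, hend, Sym2.map_map]
  · show G₃.color (gV (fV v)) = _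
    rw [gcol, hcol]

theorem isomorphic_treeOf_reroot (G : BiGraph) {a b : G.V}
    (h : Relation.ReflTransGen G.Adj a b) :
    Isomorphic (G.TreeOf a) (G.TreeOf b) := by
  induction h with
  | refl => exact isomorphic_refl _
  | tail _ hadj ih => exact isomorphic_trans ih (G.isomorphic_treeOf_adj hadj)

end BiGraph



/-- If a connected bicolored graph `G` of countable valence weakly
covers `G'` (connected, countable valence), then their canonical bicolored trees
are isomorphic. -/
theorem treeOf_invariant_under_weakCovering (G G' : BiGraph) (v₀ : G.V) (v₀' : G'.V)
    (hconn : G.Connected) (hconn' : G'.Connected)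
    (hcv : G.CountableValence) (hcv' : G'.CountableValence)
    (h : BiGraph.Covers G G') :
    BiGraph.Isomorphic (G.TreeOf v₀) (G'.TreeOf v₀') := by
  obtain ⟨fV, fE, hwc⟩ := h
  obtain ⟨u, hu⟩ := BiGraph.cover_surj hwc v₀ (hconn' (fV v₀) v₀')
  have i1 := G.isomorphic_treeOf_reroot (hconn v₀ u)
  have i2 := BiGraph.isomorphic_treeOf_cover hwc hcv u
  rw [hu] at i2
  exact BiGraph.isomorphic_trans i1 i2
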